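/- Let λ be a partition and let n be an integer with n ≥ |λ| + λ₁. Then for every partition μ with μ ≺ λ, the sequence μ[n] := (n − |μ|, μ₁, μ₂, …) is a partition of n satisfying μ[n] ≻ λ, and the map μ ↦ μ[n] is a bijection from the set {μ : μ ≺ λ} onto the set X_n(λ) := {ν : |ν| = n and ν ≻ λ}. Consequently, the cardinality of X_n(λ) is finite and does not depend on n (for n ≥ |λ| + λ₁). -/
import Mathlib


/-- A partition, encoded as a weakly decreasing finitely supported function `ℕ → ℕ`
(0-indexed: `l i` is the part `λ_{i+1}`). -/
def IsPartitionFun (l : ℕ → ℕ) : Prop := Antitone l ∧ ∃ N, ∀ i ≥ N, l i = 0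

/-- `Interlaces m l` means `m ≻ l`, i.e. `m₁ ≥ l₁ ≥ m₂ ≥ l₂ ≥ ⋯`
(0-indexed: `m i ≥ l i` and `l i ≥ m (i+1)`). -/
def Interlaces (m l : ℕ → ℕ) : Prop := (∀ i, l i ≤ m i) ∧ (∀ i, m (i + 1) ≤ l i)

/-- The number of boxes `|λ|`. -/
noncomputable def psize (l : ℕ → ℕ) : ℕ := ∑' i, l i

/-- The partition `λ[n] = (n − |λ|, λ₁, λ₂, …)`. -/
noncomputable def prepend (l : ℕ → ℕ) (n : ℕ) : ℕ → ℕ :=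
  fun i => Nat.casesOn i (n - psize l) l

/-- `X_n(λ) = {ν : |ν| = n, ν ≻ λ}`. -/
noncomputable def Xset (l : ℕ → ℕ) (n : ℕ) : Set (ℕ → ℕ) :=
  {m | IsPartitionFun m ∧ psize m = n ∧ Interlaces m l}

lemma psize_eq_sum (f : ℕ → ℕ) {N : ℕ} (h : ∀ i ≥ N, f i = 0) :
    psize f = ∑ i ∈ Finset.range N, f i := by
  refine (hasSum_sum_of_ne_finset_zero ?_).tsum_eq
  intro i hi
  exact h i (Nat.not_lt.mp (by simpa using hi))

lemma psize_succ (f : ℕ → ℕ) {N : ℕ} (h : ∀ i ≥ N, f i = 0) :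
    psize f = f 0 + psize (fun i => f (i + 1)) := by
  rw [psize_eq_sum f (N := N + 1) (fun i hi => h i (by omega)),
      psize_eq_sum (fun i => f (i + 1)) (N := N) (fun i hi => h (i + 1) (by omega)),
      Finset.sum_range_succ']
  omega

lemma psize_mono {m l : ℕ → ℕ} {N : ℕ} (hN : ∀ i ≥ N, l i = 0) (hle : ∀ i, m i ≤ l i) :
    psize m ≤ psize l := by
  rw [psize_eq_sum l hN, psize_eq_sum m (N := N)
    (fun i hi => Nat.le_zero.mp (hN i hi ▸ hle i))]
  exact Finset.sum_le_sum fun i _ => hle i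

lemma stmt2_fwd (l : ℕ → ℕ) (hl : IsPartitionFun l) (n : ℕ) (hn : psize l + l 0 ≤ n)
    (m : ℕ → ℕ) (hm : IsPartitionFun m) (hi : Interlaces l m) :
    IsPartitionFun (prepend m n) ∧ psize (prepend m n) = n ∧ Interlaces (prepend m n) l := by
  obtain ⟨hlanti, M, hlM⟩ := hl
  have hmM : ∀ i ≥ M, m i = 0 := fun i h => Nat.le_zero.mp (hlM i h ▸ hi.1 i)
  have hms : psize m ≤ psize l := psize_mono hlM hi.1
  have hm0 : psize m + m 0 ≤ n := le_trans (by have := hi.1 0; omega) hn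
  have hml : psize m + l 0 ≤ n := by omega
  have hp0 : prepend m n 0 = n - psize m := rfl
  have hpS : ∀ i, prepend m n (i + 1) = m i := fun i => rfl
  refine ⟨⟨antitone_nat_of_succ_le fun i => ?_, ⟨M + 1, fun i h => ?_⟩⟩, ?_, ?_, ?_⟩
  · cases i with
    | zero => rw [hpS, hp0]; omega
    | succ j => rw [hpS, hpS]; exact hm.1 (Nat.le_succ j)
  · obtain ⟨j, rfl⟩ : ∃ j, i = j + 1 := ⟨i - 1, by omega⟩
    rw [hpS]; exact hmM j (by omega)
  · rw [psize_succ (prepend m n) (N := M + 1)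
      (fun i h => by obtain ⟨j, rfl⟩ : ∃ j, i = j + 1 := ⟨i - 1, by omega⟩
                     exact hmM j (by omega))]
    have : psize (fun i => prepend m n (i + 1)) = psize m := rfl
    rw [this, hp0]; omega
  · intro i
    cases i with
    | zero => rw [hp0]; omega
    | succ j => rw [hpS]; exact hi.2 j
  · intro i; rw [hpS]; exact hi.1 i

lemma stmt2_bij (l : ℕ → ℕ) (hl : IsPartitionFun l) (n : ℕ) (hn : psize l + l 0 ≤ n) :
    Set.BijOn (fun m => prepend m n)
      {m | IsPartitionFun m ∧ Interlaces l m} (Xset l n) := by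
  refine ⟨fun m hm => ?_, fun m hm m' hm' h => ?_, fun v hv => ?_⟩
  · obtain ⟨h1, h2, h3⟩ := stmt2_fwd l hl n hn m hm.1 hm.2
    exact ⟨h1, h2, h3⟩
  · funext i
    have := congrFun h (i + 1)
    simpa [prepend] using this
  · obtain ⟨⟨hvanti, N, hvN⟩, hvs, hvi⟩ := hv
    refine ⟨fun i => v (i + 1), ⟨⟨fun i j h => hvanti (by omega), N, fun i h => hvN (i + 1) (by omega)⟩,
      fun i => hvi.2 i, fun i => hvi.1 (i + 1)⟩, ?_⟩
    have hshift : psize v = v 0 + psize (fun i => v (i + 1)) := psize_succ v hvN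
    funext i
    cases i with
    | zero =>
      show n - psize (fun i => v (i + 1)) = v 0
      omega
    | succ j => rfl

theorem stmt2 (l : ℕ → ℕ) (hl : IsPartitionFun l) (n : ℕ) (hn : psize l + l 0 ≤ n) :
    (∀ m : ℕ → ℕ, IsPartitionFun m → Interlaces l m →
        IsPartitionFun (prepend m n) ∧ psize (prepend m n) = n ∧ Interlaces (prepend m n) l)
    ∧ Set.BijOn (fun m => prepend m n)
        {m | IsPartitionFun m ∧ Interlaces l m} (Xset l n)
    ∧ (Xset l n).Finite
    ∧ (∀ n' : ℕ, psize l + l 0 ≤ n' → (Xset l n').ncard = (Xset l n).ncard) := by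
  obtain ⟨hlanti, M, hlM⟩ := id hl
  have hSfin : ({m | IsPartitionFun m ∧ Interlaces l m} : Set (ℕ → ℕ)).Finite := by
    have hpi : (Set.pi Set.univ (fun j : Fin M => Set.Iic (l j))).Finite :=
      Set.Finite.pi fun j => Set.finite_Iic _
    refine Set.Finite.subset (hpi.image fun g i => if h : i < M then g ⟨i, h⟩ else 0) ?_
    intro m hm
    refine ⟨fun j => m j, fun j _ => hm.2.1 j, ?_⟩
    funext i
    by_cases h : i < M
    · simp [h]
    · simp only [h, dite_false]
      exact (Nat.le_zero.mp (hlM i (by omega) ▸ hm.2.1 i)).symm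
  refine ⟨stmt2_fwd l hl n hn, stmt2_bij l hl n hn, ?_, ?_⟩
  · rw [← (stmt2_bij l hl n hn).image_eq]
    exact hSfin.image _
  · intro n' hn'
    rw [← (stmt2_bij l hl n hn).image_eq, ← (stmt2_bij l hl n' hn').image_eq,
      Set.ncard_image_of_injOn (stmt2_bij l hl n' hn').injOn,
      Set.ncard_image_of_injOn (stmt2_bij l hl n hn).injOn]
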